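/- arXiv:2409.10075 — 3 statements merged into one kernel-verified Lean document; each statement's English description precedes it below -/
import Mathlib

section
/- For every z : Fin n → ℝ, the discrete Hilbert transform H z is real-valued; that is, the imaginary part of (H z)(m) is 0 for every m. -/
/-- The discrete Fourier transform of a real signal `z : Fin n → ℝ`:
`(F z)(b) = ∑ m, z m · exp(−2πi·b·m/n)`. -/
noncomputable def dft (n : ℕ) (z : Fin n → ℝ) (b : Fin n) : ℂ :=
  ∑ m : Fin n, (z m : ℂ) *
    Complex.exp (-(2 * (Real.pi : ℂ) * Complex.I * ((b : ℕ) : ℂ) * ((m : ℕ) : ℂ)) / (n : ℂ))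

/-- The Hilbert multiplier: `μ(b) = 1` if `b = 0` or `b = n/2`, `μ(b) = −i` if `0 < b < n/2`,
and `μ(b) = i` if `n/2 < b < n`. -/
noncomputable def hilbertMul (n : ℕ) (b : Fin n) : ℂ :=
  if (b : ℕ) = 0 ∨ (b : ℕ) = n / 2 then 1
  else if (b : ℕ) < n / 2 then -Complex.I
  else Complex.I

/-- The discrete Hilbert transform of a real signal `z : Fin n → ℝ`:
`(H z)(m) = (1/n) · ∑ b, μ(b) · (F z)(b) · exp(2πi·b·m/n)`. -/
noncomputable def dht (n : ℕ) (z : Fin n → ℝ) (m : Fin n) : ℂ :=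
  (1 / (n : ℂ)) * ∑ b : Fin n, hilbertMul n b * dft n z b *
    Complex.exp (2 * (Real.pi : ℂ) * Complex.I * ((b : ℕ) : ℂ) * ((m : ℕ) : ℂ) / (n : ℂ))

namespace DHTaux

noncomputable def E (n : ℕ) (j k : ℤ) : ℂ :=
  Complex.exp (2 * (Real.pi : ℂ) * Complex.I * (j : ℂ) * (k : ℂ) / (n : ℂ))

lemma conj_E (n : ℕ) (j k : ℤ) : (starRingEnd ℂ) (E n j k) = E n (-j) k := by
  rw [E, E, ← Complex.exp_conj]
  congr 1
  rw [map_div₀]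
  push_cast
  simp [Complex.conj_I, ← Complex.ofReal_intCast, map_ofNat]

lemma E_congr (n : ℕ) (hn : 0 < n) {j j' : ℤ} (h : (n : ℤ) ∣ (j - j')) (k : ℤ) :
    E n j k = E n j' k := by
  obtain ⟨t, ht⟩ := h
  have hj : j = j' + n * t := by linarith
  subst hj
  have hn' : (n : ℂ) ≠ 0 := by exact_mod_cast hn.ne'
  rw [E, E]
  have : 2 * (Real.pi : ℂ) * Complex.I * ((j' + n * t : ℤ) : ℂ) * k / n
      = 2 * (Real.pi : ℂ) * Complex.I * (j' : ℂ) * k / n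
        + ((t * k : ℤ) : ℂ) * (2 * Real.pi * Complex.I) := by
    push_cast
    field_simp
  rw [this, Complex.exp_add, Complex.exp_int_mul_two_pi_mul_I, mul_one]

lemma dvd_neg_val (n : ℕ) (hn : 0 < n) (b : Fin n) :
    (n : ℤ) ∣ ((((-b : Fin n) : ℕ) : ℤ) + ((b : ℕ) : ℤ)) := by
  haveI : NeZero n := ⟨hn.ne'⟩
  rw [Fin.coe_neg]
  rcases Nat.eq_zero_or_pos (b : ℕ) with h | h
  · simp [h]
  · have hb : (b : ℕ) < n := b.isLt
    have : (n - (b : ℕ)) % n = n - (b : ℕ) := Nat.mod_eq_of_lt (by omega)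
    rw [this]
    have : ((n - (b : ℕ) : ℕ) : ℤ) = (n : ℤ) - ((b : ℕ) : ℤ) := by
      push_cast [Nat.cast_sub hb.le]; ring
    rw [this]
    simp

lemma dft_eq_E (n : ℕ) (z : Fin n → ℝ) (b : Fin n) :
    dft n z b = ∑ m : Fin n, (z m : ℂ) * E n (-((b : ℕ) : ℤ)) ((m : ℕ) : ℤ) := by
  unfold dft E
  refine Finset.sum_congr rfl fun m _ => ?_
  congr 1
  push_cast
  ring_nf

lemma conj_dft (n : ℕ) (hn : 0 < n) (z : Fin n → ℝ) (b : Fin n) :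
    (starRingEnd ℂ) (dft n z b) = dft n z (-b) := by
  haveI : NeZero n := ⟨hn.ne'⟩
  rw [dft_eq_E, dft_eq_E, map_sum]
  refine Finset.sum_congr rfl fun m _ => ?_
  rw [map_mul, Complex.conj_ofReal, conj_E, neg_neg]
  congr 1
  refine E_congr n hn ?_ _
  rw [sub_neg_eq_add, add_comm]
  exact dvd_neg_val n hn b

lemma conj_mul_term (n : ℕ) (hn : 0 < n) (b : Fin n) (k : ℤ) :
    (starRingEnd ℂ) (E n ((b : ℕ) : ℤ) k) = E n (((-b : Fin n) : ℕ) : ℤ) k := by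
  haveI : NeZero n := ⟨hn.ne'⟩
  rw [conj_E]
  refine E_congr n hn ?_ _
  have h : -(((b : ℕ) : ℤ)) - (((-b : Fin n) : ℕ) : ℤ)
      = -(((((-b : Fin n) : ℕ)) : ℤ) + ((b : ℕ) : ℤ)) := by ring
  rw [h]
  exact dvd_neg.mpr (dvd_neg_val n hn b)

lemma conj_hilbertMul (n : ℕ) (hn : 0 < n) (hne : Even n) (b : Fin n) :
    (starRingEnd ℂ) (hilbertMul n b) = hilbertMul n (-b) := by
  haveI : NeZero n := ⟨hn.ne'⟩
  have hb : (b : ℕ) < n := b.isLt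
  have hnv : ((-b : Fin n) : ℕ) = (n - (b : ℕ)) % n := Fin.coe_neg b
  have h2 : n / 2 * 2 = n := Nat.div_mul_cancel hne.two_dvd
  unfold hilbertMul
  rcases Nat.eq_zero_or_pos (b : ℕ) with h0 | h0
  · rw [h0] at hnv
    simp [hnv, Nat.sub_zero, Nat.mod_self, h0]
  · have hval : ((-b : Fin n) : ℕ) = n - (b : ℕ) := by
      rw [hnv, Nat.mod_eq_of_lt (by omega)]
    by_cases hhalf : (b : ℕ) = n / 2
    · have : ((-b : Fin n) : ℕ) = n / 2 := by omega
      simp [hhalf, this]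
    · by_cases hlt : (b : ℕ) < n / 2
      · have h1 : ¬(((-b : Fin n) : ℕ) = 0 ∨ ((-b : Fin n) : ℕ) = n / 2) := by omega
        have h2' : ¬(((-b : Fin n) : ℕ) < n / 2) := by omega
        simp [h0.ne', hhalf, hlt, h1, h2', Complex.conj_I, show b ≠ 0 from fun h => by simp [h] at h0,
          show ((-b : Fin n) : ℕ) ≠ n / 2 by omega]
      · have h1 : ¬(((-b : Fin n) : ℕ) = 0 ∨ ((-b : Fin n) : ℕ) = n / 2) := by omega
        have h2' : ((-b : Fin n) : ℕ) < n / 2 := by omega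
        simp [h0.ne', hhalf, hlt, h1, h2', Complex.conj_I, show b ≠ 0 from fun h => by simp [h] at h0,
          show ((-b : Fin n) : ℕ) ≠ n / 2 by omega]

end DHTaux


open DHTaux in
/-- The discrete Hilbert transform of a real signal is real-valued. -/
theorem dht_im_eq_zero (n : ℕ) (hn : 0 < n) (hne : Even n)
    (z : Fin n → ℝ) (m : Fin n) : (dht n z m).im = 0 := by
  haveI : NeZero n := ⟨hn.ne'⟩
  set S : ℂ := ∑ b : Fin n, hilbertMul n b * dft n z b *
    Complex.exp (2 * (Real.pi : ℂ) * Complex.I * ((b : ℕ) : ℂ) * ((m : ℕ) : ℂ) / (n : ℂ)) with hS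
  have hexp : ∀ b : Fin n,
      Complex.exp (2 * (Real.pi : ℂ) * Complex.I * ((b : ℕ) : ℂ) * ((m : ℕ) : ℂ) / (n : ℂ))
        = E n ((b : ℕ) : ℤ) ((m : ℕ) : ℤ) := by
    intro b; unfold E; push_cast; ring_nf
  have hconj : (starRingEnd ℂ) S = S := by
    rw [hS, map_sum]
    rw [← Equiv.sum_comp (Equiv.neg (Fin n)) (fun b => hilbertMul n b * dft n z b *
      Complex.exp (2 * (Real.pi : ℂ) * Complex.I * ((b : ℕ) : ℂ) * ((m : ℕ) : ℂ) / (n : ℂ)))]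
    refine Finset.sum_congr rfl fun b _ => ?_
    rw [map_mul, map_mul, conj_hilbertMul n hn hne b, conj_dft n hn z b,
      hexp b, conj_mul_term n hn b, ← hexp (-b)]
    rfl
  have hSim : S.im = 0 := by
    have := Complex.conj_eq_iff_im.mp hconj
    exact this
  rw [dht, ← hS, Complex.mul_im]
  simp [hSim, Complex.div_im]
end

section
/- Let Z_R be a random vector on a probability space taking values in ℝ^n (n a positive even integer) with integrable coordinate products, such that almost surely (F Z_R)(0) = 0 and (F Z_R)(n/2) = 0, and define the random vector Z_I by Z_I(m) = Re((H Z_R)(m)). Then E[∑_{m=0}^{n−1} Z_R(m)·Z_I(m)] = 0; that is, Z_R and Z_I = H{Z_R} are orthogonal in the expectation inner product. -/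
open MeasureTheory

lemma conj_dft (n : ℕ) (z : Fin n → ℝ) (b : Fin n) :
    (starRingEnd ℂ) (dft n z b) = ∑ m : Fin n, (z m : ℂ) *
      Complex.exp (2 * (Real.pi : ℂ) * Complex.I * ((b : ℕ) : ℂ) * ((m : ℕ) : ℂ) / (n : ℂ)) := by
  rw [dft, map_sum]
  refine Finset.sum_congr rfl fun m _ => ?_
  rw [map_mul, Complex.conj_ofReal, ← Complex.exp_conj]
  congr 1
  simp only [map_div₀, map_neg, map_mul, Complex.conj_I, Complex.conj_ofReal,
    Complex.conj_natCast, map_ofNat]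
  ring

lemma key (n : ℕ) (hn : 0 < n) (z : Fin n → ℝ)
    (h0 : dft n z ⟨0, hn⟩ = 0)
    (hhalf : dft n z ⟨n / 2, Nat.div_lt_self hn one_lt_two⟩ = 0) :
    ∑ m : Fin n, z m * (dht n z m).re = 0 := by
  have hre : ∑ m : Fin n, z m * (dht n z m).re
      = (∑ m : Fin n, (z m : ℂ) * dht n z m).re := by
    rw [Complex.re_sum]
    exact Finset.sum_congr rfl fun m _ => by simp [Complex.mul_re]
  rw [hre]
  have hswap : ∑ m : Fin n, (z m : ℂ) * dht n z m
      = (1 / (n : ℂ)) * ∑ b : Fin n, hilbertMul n b * dft n z b * (starRingEnd ℂ) (dft n z b) := by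
    simp only [dht, Finset.mul_sum]
    rw [Finset.sum_comm]
    refine Finset.sum_congr rfl fun b _ => ?_
    rw [conj_dft, Finset.mul_sum, Finset.mul_sum]
    refine Finset.sum_congr rfl fun m _ => ?_
    ring
  rw [hswap]
  have hz : ∀ b : Fin n, (hilbertMul n b * dft n z b * (starRingEnd ℂ) (dft n z b)).re = 0 := by
    intro b
    by_cases hb : (b : ℕ) = 0 ∨ (b : ℕ) = n / 2
    · have : dft n z b = 0 := by
        rcases hb with hb | hb
        · have : b = ⟨0, hn⟩ := Fin.ext hb
          rw [this]; exact h0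
        · have : b = ⟨n / 2, Nat.div_lt_self hn one_lt_two⟩ := Fin.ext hb
          rw [this]; exact hhalf
      simp [this]
    · rw [mul_assoc, Complex.mul_conj]
      rw [hilbertMul, if_neg hb]
      by_cases h2 : (b : ℕ) < n / 2 <;> simp [h2]
  rw [Complex.mul_re, Complex.re_sum, Complex.im_sum]
  simp [hz]

/-- Let `Z_R` be a random vector in `ℝⁿ` with integrable coordinate products whose DFT
vanishes almost surely at frequencies `0` and `n/2`, and let `Z_I = H{Z_R}` be its
(real-valued) discrete Hilbert transform. Then `E[∑ m, Z_R(m)·Z_I(m)] = 0`, i.e. `Z_R` and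
`Z_I` are orthogonal in the expectation inner product. -/
theorem expectation_inner_dht_eq_zero {Ω : Type*} [MeasurableSpace Ω]
    (μ : Measure Ω) [IsProbabilityMeasure μ] (n : ℕ) (hn : 0 < n) (hne : Even n)
    (ZR : Ω → Fin n → ℝ)
    (hint : ∀ i j : Fin n, Integrable (fun ω => ZR ω i * ZR ω j) μ)
    (h0 : ∀ᵐ ω ∂μ, dft n (ZR ω) ⟨0, hn⟩ = 0)
    (hhalf : ∀ᵐ ω ∂μ, dft n (ZR ω) ⟨n / 2, Nat.div_lt_self hn one_lt_two⟩ = 0)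
    (ZI : Ω → Fin n → ℝ) (hZI : ∀ ω m, ZI ω m = (dht n (ZR ω) m).re) :
    ∫ ω, (∑ m : Fin n, ZR ω m * ZI ω m) ∂μ = 0 := by
  have hae : ∀ᵐ ω ∂μ, (∑ m : Fin n, ZR ω m * ZI ω m) = 0 := by
    filter_upwards [h0, hhalf] with ω h1 h2
    simp only [hZI]
    exact key n hn (ZR ω) h1 h2
  calc ∫ ω, (∑ m : Fin n, ZR ω m * ZI ω m) ∂μ
      = ∫ _ω, (0 : ℝ) ∂μ := integral_congr_ae hae
    _ = 0 := integral_zero _ _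
end

section
/- Let X_R, X_I, Y, θ_f, θ_g, S be finite-valued random variables, let g, f be functions, and set Z_R = g(X_R), Z_I = f(X_I), X = (X_R, X_I), Z = (Z_R, Z_I), θ_ψ = (θ_f, θ_g). Assume that for a natural number M ≥ 1 the sample S satisfies the i.i.d. entropy identities H(S) = M·H(X, Y) and H(S | θ_ψ) = M·H(X, Y | θ_ψ). Then the Steinmetz objective J = I(X ; Z) − I(Y ; Z) + I(S ; θ_ψ) satisfies J ≥ D, where D = H(Z_R) − I(Y ; Z) + M·[H(Y) + H(X_R | Y) + H(X_I | X_R, Z_I, Y) − H(X | θ_ψ) − H(Y | X, θ_g)]. Moreover, if there exists a function φ with Z_I = φ(Z_R) almost surely and θ_f is almost surely equal to a function of (X, θ_g), then J = D. -/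
open MeasureTheory

/-- The Shannon entropy of a finite-valued random variable:
`H(X) = −∑ x, P(X = x)·log P(X = x)` (with `0·log 0 = 0`). -/
noncomputable def entropy {Ω α : Type*} [MeasurableSpace Ω] [Fintype α]
    (μ : Measure Ω) (X : Ω → α) : ℝ :=
  ∑ x : α, Real.negMulLog ((μ (X ⁻¹' {x})).toReal)

/-- Conditional entropy `H(X | Y) = H(X, Y) − H(Y)`. -/
noncomputable def condEntropy {Ω α β : Type*} [MeasurableSpace Ω] [Fintype α] [Fintype β]
    (μ : Measure Ω) (X : Ω → α) (Y : Ω → β) : ℝ :=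
  entropy μ (fun ω => (X ω, Y ω)) - entropy μ Y

/-- Mutual information `I(X ; Y) = H(X) + H(Y) − H(X, Y)`. -/
noncomputable def mutualInfo {Ω α β : Type*} [MeasurableSpace Ω] [Fintype α] [Fintype β]
    (μ : Measure Ω) (X : Ω → α) (Y : Ω → β) : ℝ :=
  entropy μ X + entropy μ Y - entropy μ (fun ω => (X ω, Y ω))

namespace SteinAux

open Real Finset

variable {Ω : Type*} [MeasurableSpace Ω] (μ : Measure Ω)

lemma entropy_congr {α : Type*} [Fintype α] {X X' : Ω → α}
    (h : ∀ᵐ ω ∂μ, X ω = X' ω) : entropy μ X = entropy μ X' := by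
  unfold entropy
  refine Finset.sum_congr rfl fun x _ => ?_
  have hs : X ⁻¹' {x} =ᵐ[μ] X' ⁻¹' {x} := by
    rw [Filter.eventuallyEq_set]
    filter_upwards [h] with ω hω
    simp [Set.mem_preimage, hω]
  rw [measure_congr hs]

lemma entropy_comp_inj {α β : Type*} [Fintype α] [Fintype β] (X : Ω → α) {e : α → β}
    (he : Function.Injective e) :
    entropy μ (fun ω => e (X ω)) = entropy μ X := by
  classical
  unfold entropy
  symm
  calc ∑ a : α, Real.negMulLog ((μ (X ⁻¹' {a})).toReal)
      = ∑ a : α, Real.negMulLog ((μ ((fun ω => e (X ω)) ⁻¹' {e a})).toReal) := by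
        refine Finset.sum_congr rfl fun a _ => ?_
        have : (fun ω => e (X ω)) ⁻¹' {e a} = X ⁻¹' {a} := by
          ext ω; simp [he.eq_iff]
        rw [this]
    _ = ∑ b ∈ Finset.univ.image e,
          Real.negMulLog ((μ ((fun ω => e (X ω)) ⁻¹' {b})).toReal) :=
        by rw [Finset.sum_image (fun a _ b _ hab => he hab)]
    _ = ∑ b : β, Real.negMulLog ((μ ((fun ω => e (X ω)) ⁻¹' {b})).toReal) := by
        refine Finset.sum_subset (Finset.subset_univ _) fun b _ hb => ?_
        have : (fun ω => e (X ω)) ⁻¹' {b} = ∅ := by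
          ext ω
          simp only [Set.mem_preimage, Set.mem_singleton_iff, Set.mem_empty_iff_false, iff_false]
          intro hc
          exact hb (Finset.mem_image.2 ⟨X ω, Finset.mem_univ _, hc⟩)
        simp [this]

lemma measure_comp_fiber {α β : Type*} [Fintype α] [MeasurableSpace α]
    [MeasurableSingletonClass α] [DecidableEq β] [IsFiniteMeasure μ]
    {X : Ω → α} (hX : Measurable X) (m : α → β) (b : β) :
    (μ ((fun ω => m (X ω)) ⁻¹' {b})).toReal
      = ∑ a ∈ Finset.univ.filter (fun a => m a = b), (μ (X ⁻¹' {a})).toReal := by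
  classical
  have hset : (fun ω => m (X ω)) ⁻¹' {b}
      = ⋃ a ∈ Finset.univ.filter (fun a => m a = b), X ⁻¹' {a} := by
    ext ω
    simp only [Set.mem_preimage, Set.mem_singleton_iff, Set.mem_iUnion, Finset.mem_filter,
      Finset.mem_univ, true_and, exists_prop]
    constructor
    · intro h; exact ⟨X ω, h, rfl⟩
    · rintro ⟨a, ha, rfl⟩; exact ha
  rw [hset, measure_biUnion_finset ?_ (fun a _ => hX (measurableSet_singleton a)),
    ENNReal.toReal_sum (fun a _ => measure_ne_top μ _)]
  intro a _ a' _ haa'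
  exact Set.disjoint_left.2 fun ω h1 h2 => haa' (by
    simp only [Set.mem_preimage, Set.mem_singleton_iff] at h1 h2; rw [← h1, ← h2])

lemma negMulLog_sum_le {ι : Type*} (s : Finset ι) (p : ι → ℝ) (hp : ∀ i ∈ s, 0 ≤ p i) :
    Real.negMulLog (∑ i ∈ s, p i) ≤ ∑ i ∈ s, Real.negMulLog (p i) := by
  classical
  have hq : ∀ i ∈ s, p i ≤ ∑ j ∈ s, p j := fun i hi => Finset.single_le_sum hp hi
  have : Real.negMulLog (∑ i ∈ s, p i) = ∑ i ∈ s, p i * (-Real.log (∑ j ∈ s, p j)) := by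
    rw [← Finset.sum_mul]; simp [Real.negMulLog]
  rw [this]
  refine Finset.sum_le_sum fun i hi => ?_
  rcases eq_or_lt_of_le (hp i hi) with h0 | h0
  · simp [← h0]
  · have hlog : Real.log (p i) ≤ Real.log (∑ j ∈ s, p j) :=
      Real.log_le_log h0 (hq i hi)
    have := mul_le_mul_of_nonneg_left (neg_le_neg hlog) (le_of_lt h0)
    simpa [Real.negMulLog, neg_mul, mul_comm] using this

/-- Data processing for entropy: `H(k ∘ m ∘ X) ≤ H(m ∘ X)`. -/
lemma entropy_comp_comp_le {α β γ : Type*} [Fintype α] [Fintype β] [Fintype γ]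
    [MeasurableSpace α] [MeasurableSingletonClass α] [IsFiniteMeasure μ]
    {X : Ω → α} (hX : Measurable X) (m : α → β) (k : β → γ) :
    entropy μ (fun ω => k (m (X ω))) ≤ entropy μ (fun ω => m (X ω)) := by
  classical
  have hu : ∀ c : γ, (μ ((fun ω => k (m (X ω))) ⁻¹' {c})).toReal
      = ∑ b ∈ Finset.univ.filter (fun b => k b = c),
          (μ ((fun ω => m (X ω)) ⁻¹' {b})).toReal := by
    intro c
    rw [measure_comp_fiber μ hX (fun a => k (m a)) c]
    have := Finset.sum_fiberwise_eq_sum_filter Finset.univ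
      (Finset.univ.filter (fun b => k b = c)) m (fun a => (μ (X ⁻¹' {a})).toReal)
    rw [show (Finset.univ.filter fun a => m a ∈ Finset.univ.filter fun b => k b = c)
        = Finset.univ.filter (fun a => k (m a) = c) by
      ext a; simp] at this
    rw [← this]
    refine Finset.sum_congr rfl fun b _ => ?_
    exact (measure_comp_fiber μ hX m b).symm
  unfold entropy
  calc ∑ c : γ, Real.negMulLog ((μ ((fun ω => k (m (X ω))) ⁻¹' {c})).toReal)
      ≤ ∑ c : γ, ∑ b ∈ Finset.univ.filter (fun b => k b = c),
          Real.negMulLog ((μ ((fun ω => m (X ω)) ⁻¹' {b})).toReal) := by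
        refine Finset.sum_le_sum fun c _ => ?_
        rw [hu c]
        exact negMulLog_sum_le _ _ (fun b _ => ENNReal.toReal_nonneg)
    _ = ∑ b : β, Real.negMulLog ((μ ((fun ω => m (X ω)) ⁻¹' {b})).toReal) :=
        Finset.sum_fiberwise _ _ _

/-- Log-sum inequality. -/
lemma logSum {ι : Type*} (I : Finset ι) (r s : ι → ℝ) (h0 : ∀ i ∈ I, 0 ≤ r i)
    (hrs : ∀ i ∈ I, r i ≤ s i) :
    ∑ i ∈ I, r i * Real.log (s i / r i)
      ≤ (∑ i ∈ I, r i) * Real.log ((∑ i ∈ I, s i) / (∑ i ∈ I, r i)) := by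
  classical
  set J := I.filter (fun i => r i ≠ 0) with hJ
  have hJsub : J ⊆ I := Finset.filter_subset _ _
  have hrJ : ∀ i ∈ J, 0 < r i := fun i hi => by
    have := Finset.mem_filter.1 hi
    exact lt_of_le_of_ne (h0 i this.1) (Ne.symm this.2)
  have hsumr : ∑ i ∈ J, r i = ∑ i ∈ I, r i := by
    refine Finset.sum_subset hJsub fun i hi hni => ?_
    by_contra hne
    exact hni (Finset.mem_filter.2 ⟨hi, hne⟩)
  have hLHS : ∑ i ∈ I, r i * Real.log (s i / r i) = ∑ i ∈ J, r i * Real.log (s i / r i) := by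
    refine (Finset.sum_subset hJsub fun i hi hni => ?_).symm
    have : r i = 0 := by by_contra hne; exact hni (Finset.mem_filter.2 ⟨hi, hne⟩)
    simp [this]
  rcases Finset.eq_empty_or_nonempty J with hJe | hJne
  · have : ∑ i ∈ I, r i = 0 := by rw [← hsumr, hJe]; simp
    rw [hLHS, hJe, this]; simp
  · have ht : 0 < ∑ i ∈ I, r i := by
      rw [← hsumr]
      exact Finset.sum_pos hrJ hJne
    set t := ∑ i ∈ I, r i with htdef
    have hmem : ∀ i ∈ J, s i / r i ∈ Set.Ioi (0 : ℝ) := fun i hi =>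
      div_pos (lt_of_lt_of_le (hrJ i hi) (hrs i (hJsub hi))) (hrJ i hi)
    have hw0 : ∀ i ∈ J, 0 ≤ r i / t := fun i hi => div_nonneg (le_of_lt (hrJ i hi)) ht.le
    have hw1 : ∑ i ∈ J, r i / t = 1 := by
      rw [← Finset.sum_div, hsumr]; exact div_self ht.ne'
    have jensen := (strictConcaveOn_log_Ioi.concaveOn).le_map_sum hw0 hw1 hmem
    have hpt : ∑ i ∈ J, (r i / t) • (s i / r i) = (∑ i ∈ J, s i) / t := by
      rw [show ∑ i ∈ J, (r i / t) • (s i / r i) = ∑ i ∈ J, s i / t from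
        Finset.sum_congr rfl fun i hi => by
          have hri := (hrJ i hi).ne'
          have htne := ht.ne'
          rw [smul_eq_mul]
          field_simp
          try ring, ← Finset.sum_div]
    rw [hpt] at jensen
    have hsJ : 0 < ∑ i ∈ J, s i :=
      lt_of_lt_of_le ht (hsumr ▸ Finset.sum_le_sum fun i hi => hrs i (hJsub hi))
    have hsI : ∑ i ∈ J, s i ≤ ∑ i ∈ I, s i := by
      refine Finset.sum_le_sum_of_subset_of_nonneg hJsub fun i hi _ =>
        le_trans (h0 i hi) (hrs i hi)
    have hmono : Real.log ((∑ i ∈ J, s i) / t) ≤ Real.log ((∑ i ∈ I, s i) / t) :=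
      Real.log_le_log (div_pos hsJ ht) (by gcongr)
    calc ∑ i ∈ I, r i * Real.log (s i / r i)
        = ∑ i ∈ J, r i * Real.log (s i / r i) := hLHS
      _ = t * ∑ i ∈ J, (r i / t) • Real.log (s i / r i) := by
          rw [Finset.mul_sum]
          refine Finset.sum_congr rfl fun i hi => ?_
          have := ht.ne'
          field_simp
          try ring
          exact (mul_inv_cancel_right₀ this _).symm
      _ ≤ t * Real.log ((∑ i ∈ J, s i) / t) := mul_le_mul_of_nonneg_left jensen ht.le
      _ ≤ t * Real.log ((∑ i ∈ I, s i) / t) := mul_le_mul_of_nonneg_left hmono ht.le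
      _ = (∑ i ∈ I, r i) * Real.log ((∑ i ∈ I, s i) / (∑ i ∈ I, r i)) := rfl

end SteinAux

namespace SteinAux

open Real Finset

variable {Ω : Type*} [MeasurableSpace Ω] (μ : Measure Ω)

lemma condEntropy_sum_form {ι κ : Type*} [Fintype ι] [Fintype κ] (r : ι × κ → ℝ) (s : κ → ℝ)
    (hs : ∀ w, s w = ∑ y, r (y, w)) (h0 : ∀ p, 0 ≤ r p) :
    ∑ p : ι × κ, Real.negMulLog (r p) - ∑ w : κ, Real.negMulLog (s w)
      = ∑ p : ι × κ, r p * Real.log (s p.2 / r p) := by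
  classical
  have hrs : ∀ p : ι × κ, r p ≤ s p.2 := fun p => by
    rw [hs]
    exact Finset.single_le_sum (f := fun y => r (y, p.2)) (fun y _ => h0 _) (Finset.mem_univ p.1)
  have key : ∀ p : ι × κ, Real.negMulLog (r p) + r p * Real.log (s p.2)
      = r p * Real.log (s p.2 / r p) := by
    intro p
    rcases eq_or_lt_of_le (h0 p) with h | h
    · simp [← h, Real.negMulLog]
    · have hb : 0 < s p.2 := lt_of_lt_of_le h (hrs p)
      rw [Real.log_div hb.ne' h.ne']
      simp only [Real.negMulLog]
      ring
  have hW : ∑ w : κ, Real.negMulLog (s w) = - ∑ p : ι × κ, r p * Real.log (s p.2) := by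
    have : ∑ p : ι × κ, r p * Real.log (s p.2)
        = ∑ w : κ, ∑ y : ι, r (y, w) * Real.log (s w) := by
      rw [Fintype.sum_prod_type]
      exact Finset.sum_comm
    rw [this]
    rw [show ∑ w : κ, ∑ y : ι, r (y, w) * Real.log (s w)
        = ∑ w : κ, s w * Real.log (s w) from Finset.sum_congr rfl fun w _ => by
          rw [← Finset.sum_mul, ← hs]]
    simp [Real.negMulLog]
  rw [hW, ← Finset.sum_congr rfl (fun p _ => key p), Finset.sum_add_distrib]
  ring

lemma toReal_meas_nonneg {α : Type*} (S : Set Ω) : (0:ℝ) ≤ (μ S).toReal := ENNReal.toReal_nonneg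

set_option maxHeartbeats 1000000 in
lemma condEntropy_coarsen_le {α β γ : Type*} [Fintype α] [Fintype β] [Fintype γ]
    [MeasurableSpace α] [MeasurableSingletonClass α]
    [MeasurableSpace β] [MeasurableSingletonClass β] [IsFiniteMeasure μ]
    {Y : Ω → α} {W : Ω → β} (hY : Measurable Y) (hW : Measurable W) (k : β → γ) :
    entropy μ (fun ω => (Y ω, W ω)) - entropy μ W
      ≤ entropy μ (fun ω => (Y ω, k (W ω))) - entropy μ (fun ω => k (W ω)) := by
  classical
  have hYW : Measurable (fun ω => (Y ω, W ω)) := hY.prodMk hW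
  set r : α × β → ℝ := fun p => (μ ((fun ω => (Y ω, W ω)) ⁻¹' {p})).toReal with hrdef
  set s : β → ℝ := fun w => (μ (W ⁻¹' {w})).toReal with hsdef
  set t : α × γ → ℝ := fun q => (μ ((fun ω => (Y ω, k (W ω))) ⁻¹' {q})).toReal with htdef
  set u : γ → ℝ := fun c => (μ ((fun ω => k (W ω)) ⁻¹' {c})).toReal with hudef
  have h0 : ∀ p, 0 ≤ r p := fun p => ENNReal.toReal_nonneg
  have hs_sum : ∀ w, s w = ∑ y, r (y, w) := by
    intro w
    have h1 : (μ ((fun ω => Prod.snd ((fun ω => (Y ω, W ω)) ω)) ⁻¹' {w})).toReal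
        = ∑ p ∈ Finset.univ.filter (fun p : α × β => p.2 = w),
            (μ ((fun ω => (Y ω, W ω)) ⁻¹' {p})).toReal :=
      measure_comp_fiber μ hYW Prod.snd w
    have h2 : (fun ω => Prod.snd ((fun ω => (Y ω, W ω)) ω)) ⁻¹' {w} = W ⁻¹' {w} := rfl
    rw [h2] at h1
    have hsw : s w = (μ (W ⁻¹' {w})).toReal := rfl
    rw [hsw, h1, Finset.sum_filter, Fintype.sum_prod_type]
    have hrp : ∀ (y : α) (w' : β), r (y, w') = (μ ((fun ω => (Y ω, W ω)) ⁻¹' {(y, w')})).toReal :=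
      fun _ _ => rfl
    simp [hrp]
  have hfilter : ∀ (y : α) (c : γ),
      Finset.univ.filter (fun p : α × β => (p.1, k p.2) = (y, c))
        = {y} ×ˢ Finset.univ.filter (fun w => k w = c) := by
    intro y c
    ext p
    simp only [Finset.mem_filter, Finset.mem_univ, true_and, Prod.ext_iff, Finset.mem_product,
      Finset.mem_singleton]
    try tauto
  have ht_sum : ∀ (y : α) (c : γ),
      t (y, c) = ∑ w ∈ Finset.univ.filter (fun w => k w = c), r (y, w) := by
    intro y c
    have h1 : (μ ((fun ω => (fun p : α × β => (p.1, k p.2)) ((fun ω => (Y ω, W ω)) ω)) ⁻¹'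
          {(y, c)})).toReal
        = ∑ p ∈ Finset.univ.filter (fun p : α × β => (p.1, k p.2) = (y, c)),
            (μ ((fun ω => (Y ω, W ω)) ⁻¹' {p})).toReal :=
      measure_comp_fiber μ hYW (fun p : α × β => (p.1, k p.2)) (y, c)
    rw [hfilter] at h1
    rw [Finset.sum_product, Finset.sum_singleton] at h1
    exact h1
  have hu_sum : ∀ c, u c = ∑ w ∈ Finset.univ.filter (fun w => k w = c), s w := by
    intro c
    exact measure_comp_fiber μ hW k c
  have hu_sum' : ∀ c, u c = ∑ y, t (y, c) := by
    intro c
    rw [hu_sum c]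
    rw [show ∑ y : α, t (y, c)
        = ∑ y : α, ∑ w ∈ Finset.univ.filter (fun w => k w = c), r (y, w) from
      Finset.sum_congr rfl fun y _ => ht_sum y c]
    rw [Finset.sum_comm]
    exact Finset.sum_congr rfl fun w _ => hs_sum w
  have ht0 : ∀ q, 0 ≤ t q := fun q => ENNReal.toReal_nonneg
  have lhs_eq : entropy μ (fun ω => (Y ω, W ω)) - entropy μ W
      = ∑ p : α × β, r p * Real.log (s p.2 / r p) :=
    condEntropy_sum_form r s hs_sum h0
  have rhs_eq : entropy μ (fun ω => (Y ω, k (W ω))) - entropy μ (fun ω => k (W ω))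
      = ∑ q : α × γ, t q * Real.log (u q.2 / t q) :=
    condEntropy_sum_form t u hu_sum' ht0
  rw [lhs_eq, rhs_eq]
  have hrs : ∀ p : α × β, r p ≤ s p.2 := fun p => by
    rw [hs_sum]
    exact Finset.single_le_sum (f := fun y => r (y, p.2)) (fun y _ => h0 _) (Finset.mem_univ p.1)
  calc ∑ p : α × β, r p * Real.log (s p.2 / r p)
      = ∑ y : α, ∑ w : β, r (y, w) * Real.log (s w / r (y, w)) := Fintype.sum_prod_type _
    _ = ∑ y : α, ∑ c : γ, ∑ w ∈ Finset.univ.filter (fun w => k w = c),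
          r (y, w) * Real.log (s w / r (y, w)) := by
        refine Finset.sum_congr rfl fun y _ => ?_
        exact (Finset.sum_fiberwise _ _ _).symm
    _ ≤ ∑ y : α, ∑ c : γ, t (y, c) * Real.log (u c / t (y, c)) := by
        refine Finset.sum_le_sum fun y _ => Finset.sum_le_sum fun c _ => ?_
        have := logSum (Finset.univ.filter (fun w => k w = c))
          (fun w => r (y, w)) (fun w => s w)
          (fun w _ => h0 _) (fun w _ => hrs (y, w))
        rw [← ht_sum y c, ← hu_sum c] at this
        exact this
    _ = ∑ q : α × γ, t q * Real.log (u q.2 / t q) :=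
        (Fintype.sum_prod_type (fun q : α × γ => t q * Real.log (u q.2 / t q))).symm

end SteinAux


set_option maxHeartbeats 4000000 in
/-- The paper's lower bound `D(Z)` on the Steinmetz objective
`J(Z) = I(X;Z) − I(Y;Z) + I(S;θ_ψ)`: assuming the i.i.d. sample entropy identities
`H(S) = M·H(X,Y)` and `H(S|θ_ψ) = M·H(X,Y|θ_ψ)`, one has `J ≥ D` where
`D = H(Z_R) − I(Y;Z) + M·[H(Y) + H(X_R|Y) + H(X_I|X_R,Z_I,Y) − H(X|θ_ψ) − H(Y|X,θ_g)]`,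
with equality if `Z_I` is almost surely a deterministic function of `Z_R` and `θ_f` is
almost surely a function of `(X, θ_g)`. -/
theorem steinmetz_lower_bound {Ω A B C A' B' Tf Tg Ts : Type*} [MeasurableSpace Ω]
    [Fintype A] [Fintype B] [Fintype C] [Fintype A'] [Fintype B']
    [Fintype Tf] [Fintype Tg] [Fintype Ts]
    [MeasurableSpace A] [DiscreteMeasurableSpace A] [MeasurableSpace B] [DiscreteMeasurableSpace B]
    [MeasurableSpace C] [DiscreteMeasurableSpace C]
    [MeasurableSpace Tf] [DiscreteMeasurableSpace Tf]
    [MeasurableSpace Tg] [DiscreteMeasurableSpace Tg]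
    [MeasurableSpace Ts] [DiscreteMeasurableSpace Ts]
    (μ : Measure Ω) [IsProbabilityMeasure μ]
    (XR : Ω → A) (XI : Ω → B) (Y : Ω → C) (θf : Ω → Tf) (θg : Ω → Tg) (S : Ω → Ts)
    (hXR : Measurable XR) (hXI : Measurable XI) (hY : Measurable Y)
    (hθf : Measurable θf) (hθg : Measurable θg) (hS : Measurable S)
    (g : A → A') (f : B → B') (M : ℕ) (hM : 1 ≤ M) :
    let ZR : Ω → A' := fun ω => g (XR ω)
    let ZI : Ω → B' := fun ω => f (XI ω)
    let X : Ω → A × B := fun ω => (XR ω, XI ω)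
    let Z : Ω → A' × B' := fun ω => (ZR ω, ZI ω)
    let θψ : Ω → Tf × Tg := fun ω => (θf ω, θg ω)
    let J : ℝ := mutualInfo μ X Z - mutualInfo μ Y Z + mutualInfo μ S θψ
    let D : ℝ := entropy μ ZR - mutualInfo μ Y Z +
      (M : ℝ) * (entropy μ Y + condEntropy μ XR Y +
        condEntropy μ XI (fun ω => (XR ω, ZI ω, Y ω)) -
        condEntropy μ X θψ - condEntropy μ Y (fun ω => (X ω, θg ω)))
    entropy μ S = (M : ℝ) * entropy μ (fun ω => (X ω, Y ω)) →
    condEntropy μ S θψ = (M : ℝ) * condEntropy μ (fun ω => (X ω, Y ω)) θψ →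
    D ≤ J ∧
      ((∃ φ : A' → B', ∀ᵐ ω ∂μ, ZI ω = φ (ZR ω)) →
       (∃ h : (A × B) × Tg → Tf, ∀ᵐ ω ∂μ, θf ω = h (X ω, θg ω)) →
       J = D) := by
  intro ZR ZI X Z θψ J D hs1 hs2
  simp only [ZR, ZI, X, Z, θψ, J, D, mutualInfo, condEntropy] at hs1 hs2 ⊢
  have inj1 : Function.Injective (fun p : A × B => (p, (g p.1, f p.2))) :=
    fun p q h => congrArg Prod.fst h
  have inj2 : Function.Injective (fun q : (A × B) × C => (q.1.2, q.1.1, f q.1.2, q.2)) := by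
    intro p q hpq
    simp only [Prod.mk.injEq, Prod.ext_iff] at hpq ⊢
    tauto
  have inj3 : Function.Injective
      (fun q : ((A × B) × C) × (Tf × Tg) => (q.1.2, q.1.1, q.2)) := by
    intro p q hpq
    simp only [Prod.mk.injEq, Prod.ext_iff] at hpq ⊢
    tauto
  have e1 : (entropy μ fun ω => ((XR ω, XI ω), g (XR ω), f (XI ω)))
      = entropy μ fun ω => (XR ω, XI ω) :=
    SteinAux.entropy_comp_inj μ (fun ω => (XR ω, XI ω)) inj1
  have e2 : (entropy μ fun ω => (XI ω, XR ω, f (XI ω), Y ω))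
      = entropy μ fun ω => ((XR ω, XI ω), Y ω) :=
    SteinAux.entropy_comp_inj μ (fun ω => ((XR ω, XI ω), Y ω)) inj2
  have e3 : (entropy μ fun ω => (Y ω, (XR ω, XI ω), θf ω, θg ω))
      = entropy μ fun ω => (((XR ω, XI ω), Y ω), θf ω, θg ω) :=
    SteinAux.entropy_comp_inj μ (fun ω => (((XR ω, XI ω), Y ω), (θf ω, θg ω))) inj3
  have i1 : (entropy μ fun ω => g (XR ω)) ≤ entropy μ fun ω => (g (XR ω), f (XI ω)) :=
    SteinAux.entropy_comp_comp_le μ (hXR.prodMk hXI)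
      (fun p : A × B => (g p.1, f p.2)) Prod.fst
  have i2 : (entropy μ fun ω => (XR ω, Y ω)) ≤ entropy μ fun ω => (XR ω, f (XI ω), Y ω) :=
    SteinAux.entropy_comp_comp_le μ (hXR.prodMk (hXI.prodMk hY))
      (fun p : A × (B × C) => (p.1, f p.2.1, p.2.2)) (fun q : A × (B' × C) => (q.1, q.2.2))
  have i3 : (entropy μ fun ω => (Y ω, (XR ω, XI ω), θf ω, θg ω))
        - (entropy μ fun ω => ((XR ω, XI ω), θf ω, θg ω))
      ≤ (entropy μ fun ω => (Y ω, (XR ω, XI ω), θg ω))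
        - (entropy μ fun ω => ((XR ω, XI ω), θg ω)) :=
    SteinAux.condEntropy_coarsen_le μ hY
      ((hXR.prodMk hXI).prodMk (hθf.prodMk hθg))
      (fun q : (A × B) × (Tf × Tg) => (q.1, q.2.2))
  have hM0 : (0 : ℝ) ≤ (M : ℝ) := Nat.cast_nonneg M
  have e2M : (M : ℝ) * (entropy μ fun ω => (XI ω, XR ω, f (XI ω), Y ω))
      = (M : ℝ) * entropy μ fun ω => ((XR ω, XI ω), Y ω) := by rw [e2]
  have e3M : (M : ℝ) * (entropy μ fun ω => (Y ω, (XR ω, XI ω), θf ω, θg ω))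
      = (M : ℝ) * entropy μ fun ω => (((XR ω, XI ω), Y ω), θf ω, θg ω) := by rw [e3]
  constructor
  · have hMul : (M : ℝ) * ((entropy μ fun ω => (XR ω, Y ω))
          + ((entropy μ fun ω => (Y ω, (XR ω, XI ω), θf ω, θg ω))
            - (entropy μ fun ω => ((XR ω, XI ω), θf ω, θg ω))))
        ≤ (M : ℝ) * ((entropy μ fun ω => (XR ω, f (XI ω), Y ω))
          + ((entropy μ fun ω => (Y ω, (XR ω, XI ω), θg ω))
            - (entropy μ fun ω => ((XR ω, XI ω), θg ω)))) :=
      mul_le_mul_of_nonneg_left (by linarith) hM0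
    linarith [hMul, e2M, e3M]
  · rintro ⟨φ, hφ⟩ ⟨h, hh⟩
    have inj4 : Function.Injective (fun a : A' => (a, φ a)) :=
      fun a b hab => congrArg Prod.fst hab
    have inj5 : Function.Injective (fun p : A × C => (p.1, φ (g p.1), p.2)) := by
      intro p q hpq
      simp only [Prod.mk.injEq, Prod.ext_iff] at hpq ⊢
      tauto
    have inj6 : Function.Injective (fun p : (A × B) × Tg => (p.1, h (p.1, p.2), p.2)) := by
      intro p q hpq
      simp only [Prod.mk.injEq, Prod.ext_iff] at hpq ⊢
      tauto
    have inj7 : Function.Injective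
        (fun p : C × ((A × B) × Tg) => (p.1, p.2.1, h (p.2.1, p.2.2), p.2.2)) := by
      intro p q hpq
      simp only [Prod.mk.injEq, Prod.ext_iff] at hpq ⊢
      tauto
    have q1 : (entropy μ fun ω => (g (XR ω), f (XI ω))) = entropy μ fun ω => g (XR ω) := by
      calc (entropy μ fun ω => (g (XR ω), f (XI ω)))
          = entropy μ fun ω => (g (XR ω), φ (g (XR ω))) :=
            SteinAux.entropy_congr μ (by filter_upwards [hφ] with ω hω; rw [hω])
        _ = entropy μ fun ω => g (XR ω) :=
            SteinAux.entropy_comp_inj μ (fun ω => g (XR ω)) inj4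
    have q2 : (entropy μ fun ω => (XR ω, f (XI ω), Y ω)) = entropy μ fun ω => (XR ω, Y ω) := by
      calc (entropy μ fun ω => (XR ω, f (XI ω), Y ω))
          = entropy μ fun ω => (XR ω, φ (g (XR ω)), Y ω) :=
            SteinAux.entropy_congr μ (by filter_upwards [hφ] with ω hω; rw [hω])
        _ = entropy μ fun ω => (XR ω, Y ω) :=
            SteinAux.entropy_comp_inj μ (fun ω => (XR ω, Y ω)) inj5
    have q3 : (entropy μ fun ω => ((XR ω, XI ω), θf ω, θg ω))
        = entropy μ fun ω => ((XR ω, XI ω), θg ω) := by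
      calc (entropy μ fun ω => ((XR ω, XI ω), θf ω, θg ω))
          = entropy μ fun ω => ((XR ω, XI ω), h ((XR ω, XI ω), θg ω), θg ω) :=
            SteinAux.entropy_congr μ (by filter_upwards [hh] with ω hω; rw [hω])
        _ = entropy μ fun ω => ((XR ω, XI ω), θg ω) :=
            SteinAux.entropy_comp_inj μ (fun ω => ((XR ω, XI ω), θg ω)) inj6
    have q4 : (entropy μ fun ω => (Y ω, (XR ω, XI ω), θf ω, θg ω))
        = entropy μ fun ω => (Y ω, (XR ω, XI ω), θg ω) := by
      calc (entropy μ fun ω => (Y ω, (XR ω, XI ω), θf ω, θg ω))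
          = entropy μ fun ω => (Y ω, (XR ω, XI ω), h ((XR ω, XI ω), θg ω), θg ω) :=
            SteinAux.entropy_congr μ (by filter_upwards [hh] with ω hω; rw [hω])
        _ = entropy μ fun ω => (Y ω, (XR ω, XI ω), θg ω) :=
            SteinAux.entropy_comp_inj μ (fun ω => (Y ω, ((XR ω, XI ω), θg ω))) inj7
    have q2M : (M : ℝ) * (entropy μ fun ω => (XR ω, f (XI ω), Y ω))
        = (M : ℝ) * entropy μ fun ω => (XR ω, Y ω) := by rw [q2]
    have q3M : (M : ℝ) * (entropy μ fun ω => ((XR ω, XI ω), θf ω, θg ω))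
        = (M : ℝ) * entropy μ fun ω => ((XR ω, XI ω), θg ω) := by rw [q3]
    have q4M : (M : ℝ) * (entropy μ fun ω => (Y ω, (XR ω, XI ω), θf ω, θg ω))
        = (M : ℝ) * entropy μ fun ω => (Y ω, (XR ω, XI ω), θg ω) := by rw [q4]
    linarith [q1, q2M, q3M, q4M, e2M, e3M]
end
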